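/- Let 0 < a < b, 1 < σ ≤ 2, and define the Green's function G(x,τ) on [a,b]×[a,b] by G(x,τ) = (1/Γ(σ))·[((ln(x/a)/ln(b/a))^{σ−1}·(ln(b/τ))^{σ−1} − (ln(x/τ))^{σ−1})/τ] for a ≤ τ ≤ x ≤ b, and G(x,τ) = (1/Γ(σ))·(ln(x/a)/ln(b/a))^{σ−1}·(ln(b/τ))^{σ−1}/τ for a ≤ x ≤ τ ≤ b. Then for every fixed x ∈ [a,b], Γ(σ+1)·∫_a^b G(x,τ) dτ = (ln(b/a))·(ln(x/a))^{σ−1} − (ln(x/a))^{σ}. -/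

import Mathlib

open Real Set intervalIntegral

lemma key1 (c d σ : ℝ) (hc : 0 < c) (hcd : c ≤ d) (hσ : 1 < σ) :
    ∫ τ in c..d, (Real.log d - Real.log τ) ^ (σ - 1) / τ
      = (Real.log d - Real.log c) ^ σ / σ := by
  have hσ0 : σ ≠ 0 := by linarith
  have huIcc : Set.uIcc c d = Set.Icc c d := Set.uIcc_of_le hcd
  have hder : ∀ τ ∈ Set.uIcc c d,
      HasDerivAt (fun t => -((Real.log d - Real.log t) ^ σ / σ))
        ((Real.log d - Real.log τ) ^ (σ - 1) / τ) τ := by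
    intro τ hτ
    rw [huIcc] at hτ
    have hτ0 : 0 < τ := lt_of_lt_of_le hc hτ.1
    have h1 : HasDerivAt (fun t => Real.log d - Real.log t) (0 - τ⁻¹) τ :=
      (hasDerivAt_const _ _).sub (Real.hasDerivAt_log hτ0.ne')
    have h2 : HasDerivAt (fun y : ℝ => y ^ σ)
        (σ * (Real.log d - Real.log τ) ^ (σ - 1)) (Real.log d - Real.log τ) :=
      Real.hasDerivAt_rpow_const (Or.inr hσ.le)
    have h3 := (h2.comp τ h1).div_const σ |>.neg
    convert h3 using 1
    · rfl
    · rfl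
    · rfl
    rw [zero_sub, mul_neg, neg_div, neg_neg, mul_assoc, mul_div_cancel_left₀ _ hσ0, div_eq_mul_inv]
  have hint : IntervalIntegrable (fun τ => (Real.log d - Real.log τ) ^ (σ - 1) / τ)
      MeasureTheory.volume c d := by
    apply ContinuousOn.intervalIntegrable
    intro τ hτ
    rw [huIcc] at hτ
    have hτ0 : 0 < τ := lt_of_lt_of_le hc hτ.1
    exact (((continuousAt_const.sub (Real.continuousAt_log hτ0.ne')).rpow_const
      (Or.inr (by linarith))).div continuousAt_id hτ0.ne').continuousWithinAt
  rw [intervalIntegral.integral_eq_sub_of_hasDerivAt hder hint]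
  rw [sub_self, Real.zero_rpow hσ0]
  ring

lemma intkey (c e d σ : ℝ) (hc : 0 < c) (hce : c ≤ e) (hσ : 1 < σ) :
    IntervalIntegrable (fun τ => (Real.log d - Real.log τ) ^ (σ - 1) / τ)
      MeasureTheory.volume c e := by
  apply ContinuousOn.intervalIntegrable
  intro τ hτ
  rw [Set.uIcc_of_le hce] at hτ
  have hτ0 : 0 < τ := lt_of_lt_of_le hc hτ.1
  exact (((continuousAt_const.sub (Real.continuousAt_log hτ0.ne')).rpow_const
    (Or.inr (by linarith))).div continuousAt_id hτ0.ne').continuousWithinAt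

theorem stmt_4 (a b σ : ℝ) (ha : 0 < a) (hab : a < b) (hσ1 : 1 < σ) (hσ2 : σ ≤ 2)
    (G : ℝ → ℝ → ℝ)
    (hG : ∀ x τ, G x τ =
      if τ ≤ x then
        (1 / Real.Gamma σ) *
          (((Real.log (x / a) / Real.log (b / a)) ^ (σ - 1) * (Real.log (b / τ)) ^ (σ - 1)
            - (Real.log (x / τ)) ^ (σ - 1)) / τ)
      else
        (1 / Real.Gamma σ) *
          ((Real.log (x / a) / Real.log (b / a)) ^ (σ - 1) * (Real.log (b / τ)) ^ (σ - 1) / τ)) :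
    ∀ x ∈ Icc a b,
      Real.Gamma (σ + 1) * ∫ τ in a..b, G x τ
        = Real.log (b / a) * (Real.log (x / a)) ^ (σ - 1) - (Real.log (x / a)) ^ σ := by
  intro x hx
  obtain ⟨hax, hxb⟩ := hx
  have hb : 0 < b := lt_trans ha hab
  have hx0 : 0 < x := lt_of_lt_of_le ha hax
  have hΓpos : 0 < Real.Gamma σ := Real.Gamma_pos_of_pos (by linarith)
  have hΓ : Real.Gamma σ ≠ 0 := hΓpos.ne'
  set C : ℝ := (Real.log (x / a) / Real.log (b / a)) ^ (σ - 1) with hC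
  set base : ℝ → ℝ := fun τ =>
    ((1 / Real.Gamma σ) * C) * ((Real.log b - Real.log τ) ^ (σ - 1) / τ) with hbase
  set extra : ℝ → ℝ := fun τ =>
    (1 / Real.Gamma σ) * ((Real.log x - Real.log τ) ^ (σ - 1) / τ) with hextra
  -- pointwise description of G x on [a,b]
  have hGeq : ∀ τ, a ≤ τ → τ ≤ b → G x τ = base τ - (if τ ≤ x then extra τ else 0) := by
    intro τ hτa hτb
    have hτ0 : 0 < τ := lt_of_lt_of_le ha hτa
    have hbτ : Real.log (b / τ) = Real.log b - Real.log τ := Real.log_div hb.ne' hτ0.ne'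
    have hxτ : Real.log (x / τ) = Real.log x - Real.log τ := Real.log_div hx0.ne' hτ0.ne'
    rw [hG, hbτ, hxτ]
    by_cases h : τ ≤ x <;> simp [h, hbase, hextra, hC]
    · ring
    · ring
  -- integrability
  have hbase_int : ∀ c e : ℝ, a ≤ c → c ≤ e → e ≤ b →
      IntervalIntegrable base MeasureTheory.volume c e := by
    intro c e hc hce _
    exact (intkey c e b σ (lt_of_lt_of_le ha hc) hce hσ1).const_mul _
  have hextra_int : IntervalIntegrable extra MeasureTheory.volume a x :=
    (intkey a x x σ ha hax hσ1).const_mul _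
  have hG1 : IntervalIntegrable (G x) MeasureTheory.volume a x := by
    apply ((hbase_int a x le_rfl hax hxb).sub hextra_int).congr
    intro τ hτ
    rw [Set.uIoc_of_le hax] at hτ
    rw [hGeq τ hτ.1.le (le_trans hτ.2 hxb), if_pos hτ.2]
  have hG2 : IntervalIntegrable (G x) MeasureTheory.volume x b := by
    apply (hbase_int x b hax hxb le_rfl).congr
    intro τ hτ
    rw [Set.uIoc_of_le hxb] at hτ
    rw [hGeq τ (le_trans hax hτ.1.le) hτ.2, if_neg (not_le.mpr hτ.1), sub_zero]
  -- split the integral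
  have hsplit : (∫ τ in a..b, G x τ) = (∫ τ in a..x, G x τ) + ∫ τ in x..b, G x τ :=
    (intervalIntegral.integral_add_adjacent_intervals hG1 hG2).symm
  have hI1 : (∫ τ in a..x, G x τ) = (∫ τ in a..x, base τ) - ∫ τ in a..x, extra τ := by
    rw [← intervalIntegral.integral_sub (hbase_int a x le_rfl hax hxb) hextra_int]
    apply intervalIntegral.integral_congr_ae
    filter_upwards with τ hτ
    rw [Set.uIoc_of_le hax] at hτ
    rw [hGeq τ hτ.1.le (le_trans hτ.2 hxb), if_pos hτ.2]
  have hI2 : (∫ τ in x..b, G x τ) = ∫ τ in x..b, base τ := by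
    apply intervalIntegral.integral_congr_ae
    filter_upwards with τ hτ
    rw [Set.uIoc_of_le hxb] at hτ
    rw [hGeq τ (le_trans hax hτ.1.le) hτ.2, if_neg (not_le.mpr hτ.1), sub_zero]
  have hbasesum : (∫ τ in a..x, base τ) + (∫ τ in x..b, base τ) = ∫ τ in a..b, base τ :=
    intervalIntegral.integral_add_adjacent_intervals (hbase_int a x le_rfl hax hxb)
      (hbase_int x b hax hxb le_rfl)
  have hbaseval : (∫ τ in a..b, base τ)
      = ((1 / Real.Gamma σ) * C) * ((Real.log b - Real.log a) ^ σ / σ) := by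
    rw [hbase]
    rw [intervalIntegral.integral_const_mul, key1 a b σ ha hab.le hσ1]
  have hextraval : (∫ τ in a..x, extra τ)
      = (1 / Real.Gamma σ) * ((Real.log x - Real.log a) ^ σ / σ) := by
    rw [hextra]
    rw [intervalIntegral.integral_const_mul, key1 a x σ ha hax hσ1]
  have htotal : (∫ τ in a..b, G x τ)
      = ((1 / Real.Gamma σ) * C) * ((Real.log b - Real.log a) ^ σ / σ)
        - (1 / Real.Gamma σ) * ((Real.log x - Real.log a) ^ σ / σ) := by
    rw [hsplit, hI1, hI2]
    rw [← hbaseval, ← hbasesum, hextraval]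
    ring
  -- final algebra
  have hLb : Real.log (b / a) = Real.log b - Real.log a := Real.log_div hb.ne' ha.ne'
  have hLx : Real.log (x / a) = Real.log x - Real.log a := Real.log_div hx0.ne' ha.ne'
  have hLbpos : 0 < Real.log b - Real.log a := sub_pos.mpr (Real.log_lt_log ha hab)
  have hLxnn : 0 ≤ Real.log x - Real.log a :=
    sub_nonneg.mpr (Real.log_le_log ha hax)
  have hCval : C * (Real.log b - Real.log a) ^ σ
      = (Real.log b - Real.log a) * (Real.log x - Real.log a) ^ (σ - 1) := by
    rw [hC, hLx, hLb, Real.div_rpow hLxnn hLbpos.le]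
    have h9 : (Real.log b - Real.log a) ^ σ
        = (Real.log b - Real.log a) ^ (σ - 1) * (Real.log b - Real.log a) := by
      nth_rewrite 1 [show σ = (σ - 1) + 1 by ring]
      rw [Real.rpow_add hLbpos, Real.rpow_one]
    have hne : (Real.log b - Real.log a) ^ (σ - 1) ≠ 0 := by positivity
    rw [h9]
    field_simp
  have hσ0 : σ ≠ 0 := by positivity
  rw [htotal, Real.Gamma_add_one hσ0, hLb, hLx, ← hCval]
  field_simp
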